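/- Unfocused forecaster with uniform outcome is not probabilistically tail calibrated: let Y be uniformly distributed on [0, 1], let τ be independent of Y with P(τ = +1) = P(τ = −1) = 1/2, and given τ define F(y) = (G(y) + G(y + τ))/2 where G is the cdf of the uniform distribution on [0,1]; thus F(y) = y/2 if τ = −1 and F(y) = (y + 1)/2 if τ = +1, for y ∈ [0,1]. Then for every u ∈ (0,1), lim_{t ↑ 1} P(Z_F^{(t)} ≤ u | Y > t) = 1/2 + u/2; in particular F is probabilistically calibrated but not probabilistically tail calibrated. -/

import Mathlib

open MeasureTheory ProbabilityTheory Filter Set Topology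

noncomputable section

/-- Conditional probability of a set given a sub-σ-algebra, as a real-valued function. -/
def condProb {Ω : Type*} {m0 : MeasurableSpace Ω} (μ : Measure Ω) (m : MeasurableSpace Ω)
    (A : Set Ω) : Ω → ℝ :=
  μ[A.indicator (fun _ => (1 : ℝ))|m]

/-- The conditional forecast excess distribution `F_t`. -/
def excessCdf (F : ℝ → ℝ) (t x : ℝ) : ℝ :=
  if F t < 1 then (F (x + t) - F t) / (1 - F t) else 1

/-- The excess probability integral transform `Z_F^{(t)}`. -/
def excessPIT {Ω : Type*} (F : Ω → ℝ → ℝ) (Y : Ω → ℝ) (t : ℝ) (ω : Ω) : ℝ :=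
  excessCdf (F ω) t (Y ω - t)

/-- Upper endpoint `x_Y = sup {x : P(Y ≤ x) < 1}` of the outcome, in `EReal`. -/
def upperEndpoint {Ω : Type*} {mΩ : MeasurableSpace Ω} (μ : Measure Ω) (Y : Ω → ℝ) : EReal :=
  sSup (Real.toEReal '' {x : ℝ | μ {ω | Y ω ≤ x} < 1})

/-- Upper endpoint of a (deterministic) cdf. -/
def cdfEndpoint (F : ℝ → ℝ) : EReal :=
  sSup (Real.toEReal '' {x : ℝ | F x < 1})

/-- The filter of real `t` tending to an extended-real endpoint `e` from below. -/
def toEndpoint (e : EReal) : Filter ℝ :=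
  Filter.comap Real.toEReal (𝓝[<] e)

/-- `F` is a random cdf: measurable in `ω`, and almost surely a continuous cdf. -/
def IsRandomCdf {Ω : Type*} {mΩ : MeasurableSpace Ω} (μ : Measure Ω) (F : Ω → ℝ → ℝ) : Prop :=
  (∀ x : ℝ, Measurable fun ω => F ω x) ∧
    ∀ᵐ ω ∂μ, Monotone (F ω) ∧ Continuous (F ω) ∧
      Tendsto (F ω) atTop (𝓝 1) ∧ Tendsto (F ω) atBot (𝓝 0)

/-- The endpoint assumption for a sub-σ-algebra `m`: the conditional distribution of `Y`
given `m` has (non-random) upper endpoint `x_Y`. -/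
def EndpointAssumption {Ω : Type*} {m0 : MeasurableSpace Ω} (μ : Measure Ω)
    (m : MeasurableSpace Ω) (Y : Ω → ℝ) : Prop :=
  (∀ t : ℝ, (t : EReal) < upperEndpoint μ Y →
      ∀ᵐ ω ∂μ, 0 < condProb μ m {ω' | t < Y ω'} ω) ∧
    ∀ᵐ ω ∂μ, condProb μ m {ω' | upperEndpoint μ Y < (Y ω' : EReal)} ω = 0

/-- `F` is tail `m`-calibrated for `Y`. -/
def TailCalibrated {Ω : Type*} {m0 : MeasurableSpace Ω} (μ : Measure Ω)
    (m : MeasurableSpace Ω) (F : Ω → ℝ → ℝ) (Y : Ω → ℝ) : Prop :=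
  (∀ t : ℝ, (t : EReal) < upperEndpoint μ Y →
      ∀ᵐ ω ∂μ, 0 < (μ[fun ω' => 1 - F ω' t|m]) ω) ∧
    ∀ u ∈ Icc (0 : ℝ) 1, ∀ᵐ ω ∂μ,
      Tendsto (fun t : ℝ =>
          condProb μ m {ω' | excessPIT F Y t ω' ≤ u ∧ t < Y ω'} ω /
            (μ[fun ω' => 1 - F ω' t|m]) ω)
        (toEndpoint (upperEndpoint μ Y)) (𝓝 u)

/-- `F` is probabilistically tail calibrated for `Y`. -/
def ProbTailCalibrated {Ω : Type*} {mΩ : MeasurableSpace Ω} (μ : Measure Ω)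
    (F : Ω → ℝ → ℝ) (Y : Ω → ℝ) : Prop :=
  (∀ t : ℝ, (t : EReal) < upperEndpoint μ Y → 0 < ∫ ω, (1 - F ω t) ∂μ) ∧
    ∀ u ∈ Icc (0 : ℝ) 1,
      Tendsto (fun t : ℝ =>
          (μ {ω | excessPIT F Y t ω ≤ u ∧ t < Y ω}).toReal / ∫ ω, (1 - F ω t) ∂μ)
        (toEndpoint (upperEndpoint μ Y)) (𝓝 u)

/-- `F` is marginally tail calibrated for `Y`. -/
def MargTailCalibrated {Ω : Type*} {mΩ : MeasurableSpace Ω} (μ : Measure Ω)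
    (F : Ω → ℝ → ℝ) (Y : Ω → ℝ) : Prop :=
  (∀ t : ℝ, (t : EReal) < upperEndpoint μ Y → 0 < ∫ ω, (1 - F ω t) ∂μ) ∧
    Tendsto (fun t : ℝ =>
        ⨆ x : Ici (0 : ℝ),
          |(μ {ω | t < Y ω ∧ Y ω ≤ t + (x : ℝ)}).toReal / (∫ ω, (1 - F ω t) ∂μ) -
            (∫ ω in {ω' | t < Y ω'}, excessCdf (F ω) t (x : ℝ) ∂μ) /
              (μ {ω' | t < Y ω'}).toReal|)
      (toEndpoint (upperEndpoint μ Y)) (𝓝 0)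

/-- Generalized Pareto survival function `(1 + ξ x)₊^(-1/ξ)` with unit scale and shape `ξ`,
interpreted as `exp (-x)` when `ξ = 0`. -/
def gpdSurv (ξ x : ℝ) : ℝ :=
  if ξ = 0 then Real.exp (-x) else (max (1 + ξ * x) 0) ^ (-(1 : ℝ) / ξ)


section AuxLemmas

lemma clampAux_le_iff {v c : ℝ} (h0 : 0 ≤ c) (h1 : c < 1) :
    min (max v 0) 1 ≤ c ↔ v ≤ c := by
  simp only [min_def, max_def]; split_ifs <;> constructor <;> intro <;> linarith

lemma clampAux_sum1 (y : ℝ) :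
    (min (max y 0) 1 + min (max (y + 1) 0) 1) / 2 = min (max ((y + 1) / 2) 0) 1 := by
  simp only [min_def, max_def]; split_ifs <;> linarith

lemma clampAux_sum2 (y : ℝ) :
    (min (max y 0) 1 + min (max (y + -1) 0) 1) / 2 = min (max (y / 2) 0) 1 := by
  simp only [min_def, max_def]; split_ifs <;> linarith

lemma clampAux_eval {t : ℝ} (h0 : 0 ≤ t) (h1 : t ≤ 1) : min (max t 0) 1 = t := by
  rw [max_eq_left h0, min_eq_left h1]

lemma clampAux_split {u : ℝ} (h0 : 0 ≤ u) (h1 : u ≤ 1) :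
    min (max (2 * u - 1) 0) 1 + min (max (2 * u) 0) 1 = 2 * u := by
  simp only [min_def, max_def]; split_ifs <;> linarith

lemma branch1 {t u y : ℝ} (ht : 0 < t) (ht1 : t < 1) (hu : 0 < u) (hu1 : u < 1) :
    ((min (max ((y + 1) / 2) 0) 1 - (t + 1) / 2) / (1 - (t + 1) / 2) ≤ u ∧ t < y) ↔
      (t < y ∧ y ≤ t + u * (1 - t)) := by
  rw [div_le_iff₀ (by linarith)]
  constructor
  · rintro ⟨h, hty⟩
    refine ⟨hty, ?_⟩
    have h2 := (clampAux_le_iff (v := (y + 1) / 2) (c := (t + u * (1 - t) + 1) / 2)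
      (by nlinarith) (by nlinarith)).mp (by nlinarith)
    linarith
  · rintro ⟨hty, h⟩
    refine ⟨?_, hty⟩
    have h2 : min (max ((y + 1) / 2) 0) 1 ≤ (t + u * (1 - t) + 1) / 2 :=
      (clampAux_le_iff (by nlinarith) (by nlinarith)).mpr (by linarith)
    nlinarith

lemma branch2 {t u y : ℝ} (ht : 0 < t) (ht1 : t < 1) (hu : 0 < u) (hu1 : u < 1) :
    ((min (max (y / 2) 0) 1 - t / 2) / (1 - t / 2) ≤ u ∧ t < y) ↔
      (t < y ∧ y ≤ t + u * (2 - t)) := by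
  rw [div_le_iff₀ (by linarith)]
  constructor
  · rintro ⟨h, hty⟩
    refine ⟨hty, ?_⟩
    have h2 := (clampAux_le_iff (v := y / 2) (c := (t + u * (2 - t)) / 2)
      (by nlinarith) (by nlinarith)).mp (by nlinarith)
    linarith
  · rintro ⟨hty, h⟩
    refine ⟨?_, hty⟩
    have h2 : min (max (y / 2) 0) 1 ≤ (t + u * (2 - t)) / 2 :=
      (clampAux_le_iff (by nlinarith) (by nlinarith)).mpr (by linarith)
    nlinarith

lemma toEndpoint_coe_one : toEndpoint ((1 : ℝ) : EReal) = 𝓝[<] (1 : ℝ) := by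
  unfold toEndpoint
  rw [nhdsWithin, comap_inf, comap_principal, nhdsWithin]
  congr 1
  · exact (EReal.isEmbedding_coe.nhds_eq_comap 1).symm
  · congr 1
    ext x
    exact EReal.coe_lt_coe_iff

end AuxLemmas

set_option maxHeartbeats 2000000 in
/-- the unfocused forecaster with a uniform outcome is probabilistically
calibrated but not probabilistically tail calibrated. -/
theorem unfocused_uniform_not_probTailCalibrated
    {Ω : Type*} {m0 : MeasurableSpace Ω} (μ : Measure Ω) [IsProbabilityMeasure μ]
    (Y τ : Ω → ℝ) (hY : Measurable Y) (hτ : Measurable τ)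
    (hYdist : ∀ x : ℝ, (μ {ω | Y ω ≤ x}).toReal = min (max x 0) 1)
    (hτval : ∀ ω, τ ω = 1 ∨ τ ω = -1)
    (hτhalf : μ {ω | τ ω = 1} = 1 / 2)
    (hindep : IndepFun Y τ μ)
    (F : Ω → ℝ → ℝ)
    (hFdef : ∀ ω y, F ω y =
      (min (max y 0) 1 + min (max (y + τ ω) 0) 1) / 2) :
    (∀ u ∈ Icc (0 : ℝ) 1, (μ {ω | F ω (Y ω) ≤ u}).toReal = u) ∧
      (∀ u ∈ Ioo (0 : ℝ) 1,
        Tendsto (fun t : ℝ =>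
            (μ {ω | excessPIT F Y t ω ≤ u ∧ t < Y ω}).toReal /
              (μ {ω | t < Y ω}).toReal)
          (𝓝[<] (1 : ℝ)) (𝓝 (1 / 2 + u / 2))) ∧
      ¬ ProbTailCalibrated μ F Y := by
  -- basic facts about the distribution of Y and τ
  have hμY : ∀ x : ℝ, μ {ω | Y ω ≤ x} = ENNReal.ofReal (min (max x 0) 1) := by
    intro x
    rw [← hYdist x, ENNReal.ofReal_toReal (measure_ne_top μ _)]
  have hτm1 : μ {ω | τ ω = -1} = 1 / 2 := by
    have hc : {ω | τ ω = (-1:ℝ)} = {ω | τ ω = 1}ᶜ := by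
      ext ω; rcases hτval ω with h | h <;> simp [h] <;> norm_num
    rw [hc, measure_compl (show MeasurableSet {ω | τ ω = 1} from
      hτ (measurableSet_singleton 1)) (measure_ne_top μ _), measure_univ, hτhalf]
    exact ENNReal.sub_half ENNReal.one_ne_top
  have hIoc : ∀ t a : ℝ, t ≤ a →
      μ {ω | t < Y ω ∧ Y ω ≤ a} = ENNReal.ofReal (min (max a 0) 1 - min (max t 0) 1) := by
    intro t a hta
    have hs : {ω | t < Y ω ∧ Y ω ≤ a} = {ω | Y ω ≤ a} \ {ω | Y ω ≤ t} := by
      ext ω; simp only [mem_setOf_eq, mem_diff, not_le]; tauto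
    rw [hs, measure_diff (show {ω | Y ω ≤ t} ⊆ {ω | Y ω ≤ a} from fun ω h => le_trans h hta)
      (show MeasurableSet {ω | Y ω ≤ t} from hY measurableSet_Iic).nullMeasurableSet
      (measure_ne_top μ _), hμY, hμY, ← ENNReal.ofReal_sub]
    positivity
  have hprod : ∀ (t a c : ℝ), μ ({ω | t < Y ω ∧ Y ω ≤ a} ∩ {ω | τ ω = c}) =
      μ {ω | t < Y ω ∧ Y ω ≤ a} * μ {ω | τ ω = c} :=
    fun t a c => hindep.measure_inter_preimage_eq_mul (Set.Ioc t a) {c}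
      measurableSet_Ioc (measurableSet_singleton c)
  have hprodIic : ∀ (a c : ℝ), μ ({ω | Y ω ≤ a} ∩ {ω | τ ω = c}) =
      μ {ω | Y ω ≤ a} * μ {ω | τ ω = c} :=
    fun a c => hindep.measure_inter_preimage_eq_mul (Set.Iic a) {c}
      measurableSet_Iic (measurableSet_singleton c)
  -- F on each branch
  have hF1 : ∀ ω, τ ω = 1 → ∀ y, F ω y = min (max ((y + 1) / 2) 0) 1 := by
    intro ω h y
    rw [hFdef, h]
    exact clampAux_sum1 y
  have hF2 : ∀ ω, τ ω = -1 → ∀ y, F ω y = min (max (y / 2) 0) 1 := by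
    intro ω h y
    rw [hFdef, h]
    exact clampAux_sum2 y
  -- the key set identity for the excess PIT
  have hS : ∀ t ∈ Ioo (0:ℝ) 1, ∀ u ∈ Ioo (0:ℝ) 1,
      {ω | excessPIT F Y t ω ≤ u ∧ t < Y ω} =
        ({ω | t < Y ω ∧ Y ω ≤ t + u * (1 - t)} ∩ {ω | τ ω = 1}) ∪
          ({ω | t < Y ω ∧ Y ω ≤ t + u * (2 - t)} ∩ {ω | τ ω = -1}) := by
    rintro t ⟨ht0, ht1⟩ u ⟨hu0, hu1⟩
    ext ω
    simp only [mem_setOf_eq, mem_union, mem_inter_iff]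
    rcases hτval ω with h | h
    · have hFt : F ω t = (t + 1) / 2 := by
        rw [hF1 ω h]; exact clampAux_eval (by linarith) (by linarith)
      have hPIT : excessPIT F Y t ω =
          (min (max ((Y ω + 1) / 2) 0) 1 - (t + 1) / 2) / (1 - (t + 1) / 2) := by
        unfold excessPIT excessCdf
        rw [if_pos (by rw [hFt]; linarith), sub_add_cancel, hF1 ω h, hFt]
      rw [hPIT]
      constructor
      · intro hh; exact Or.inl ⟨(branch1 ht0 ht1 hu0 hu1).mp hh, h⟩
      · rintro (⟨hh, _⟩ | ⟨_, h'⟩)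
        · exact (branch1 ht0 ht1 hu0 hu1).mpr hh
        · rw [h] at h'; norm_num at h'
    · have hFt : F ω t = t / 2 := by
        rw [hF2 ω h]; exact clampAux_eval (by linarith) (by linarith)
      have hPIT : excessPIT F Y t ω =
          (min (max ((Y ω) / 2) 0) 1 - t / 2) / (1 - t / 2) := by
        unfold excessPIT excessCdf
        rw [if_pos (by rw [hFt]; linarith), sub_add_cancel, hF2 ω h, hFt]
      rw [hPIT]
      constructor
      · intro hh; exact Or.inr ⟨(branch2 ht0 ht1 hu0 hu1).mp hh, h⟩
      · rintro (⟨_, h'⟩ | ⟨hh, _⟩)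
        · rw [h] at h'; norm_num at h'
        · exact (branch2 ht0 ht1 hu0 hu1).mpr hh
  -- the numerator value
  have hval : ∀ u ∈ Ioo (0:ℝ) 1, ∀ t, 0 < t → t < 1 → 1 - u ≤ t →
      (μ {ω | excessPIT F Y t ω ≤ u ∧ t < Y ω}).toReal = (1 + u) * (1 - t) / 2 := by
    rintro u hu t ht0 ht1 htu
    obtain ⟨hu0, hu1⟩ := hu
    rw [hS t ⟨ht0, ht1⟩ u ⟨hu0, hu1⟩]
    have hdisj : Disjoint ({ω | t < Y ω ∧ Y ω ≤ t + u * (1 - t)} ∩ {ω | τ ω = 1})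
        ({ω | t < Y ω ∧ Y ω ≤ t + u * (2 - t)} ∩ {ω | τ ω = -1}) := by
      rw [Set.disjoint_left]
      rintro ω ⟨_, h1⟩ ⟨_, h2⟩
      rw [mem_setOf_eq] at h1 h2; rw [h1] at h2; norm_num at h2
    have hmeas : MeasurableSet ({ω | t < Y ω ∧ Y ω ≤ t + u * (2 - t)} ∩ {ω | τ ω = -1}) :=
      (hY (measurableSet_Ioc (a := t) (b := t + u * (2 - t)))).inter
        (hτ (measurableSet_singleton (-1)))
    rw [measure_union hdisj hmeas, hprod, hprod, hτhalf, hτm1,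
      hIoc t (t + u * (1 - t)) (by nlinarith), hIoc t (t + u * (2 - t)) (by nlinarith),
      clampAux_eval ht0.le ht1.le,
      clampAux_eval (t := t + u * (1 - t)) (by nlinarith) (by nlinarith),
      show min (max (t + u * (2 - t)) 0) 1 = 1 from
        min_eq_right (le_trans (by nlinarith) (le_max_left (t + u * (2 - t)) 0))]
    rw [ENNReal.toReal_add (ENNReal.mul_ne_top ENNReal.ofReal_ne_top (by norm_num))
      (ENNReal.mul_ne_top ENNReal.ofReal_ne_top (by norm_num)), ENNReal.toReal_mul,
      ENNReal.toReal_mul, ENNReal.toReal_ofReal (by nlinarith),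
      ENNReal.toReal_ofReal (by nlinarith),
      show ((1:ENNReal)/2).toReal = 1/2 by norm_num]
    ring
  -- the denominator P(Y > t)
  have hgt : ∀ t : ℝ, 0 ≤ t → t ≤ 1 → (μ {ω | t < Y ω}).toReal = 1 - t := by
    intro t h0 h1
    have hc : {ω | t < Y ω} = {ω | Y ω ≤ t}ᶜ := by
      ext ω; simp only [mem_setOf_eq, mem_compl_iff, not_le]
    rw [hc, measure_compl (show MeasurableSet {ω | Y ω ≤ t} from hY measurableSet_Iic)
      (measure_ne_top μ _), measure_univ, hμY, clampAux_eval h0 h1,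
      ENNReal.toReal_sub_of_le (ENNReal.ofReal_le_one.mpr h1) ENNReal.one_ne_top,
      ENNReal.toReal_one, ENNReal.toReal_ofReal h0]
  -- part 1: probabilistic calibration
  have part1 : ∀ u ∈ Icc (0:ℝ) 1, (μ {ω | F ω (Y ω) ≤ u}).toReal = u := by
    rintro u ⟨hu0, hu1⟩
    rcases eq_or_lt_of_le hu1 with rfl | hu1
    · have huniv : {ω | F ω (Y ω) ≤ 1} = univ := eq_univ_of_forall fun ω => by
        rcases hτval ω with h | h
        · rw [mem_setOf_eq, hF1 ω h]; exact min_le_right _ 1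
        · rw [mem_setOf_eq, hF2 ω h]; exact min_le_right _ 1
      rw [huniv, measure_univ, ENNReal.toReal_one]
    · have hSu : {ω | F ω (Y ω) ≤ u} =
          ({ω | Y ω ≤ 2 * u - 1} ∩ {ω | τ ω = 1}) ∪
            ({ω | Y ω ≤ 2 * u} ∩ {ω | τ ω = -1}) := by
        ext ω
        simp only [mem_setOf_eq, mem_union, mem_inter_iff]
        rcases hτval ω with h | h
        · rw [hF1 ω h, clampAux_le_iff hu0 hu1]
          constructor
          · intro hh; exact Or.inl ⟨by linarith, h⟩
          · rintro (⟨hh, _⟩ | ⟨_, h'⟩)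
            · linarith
            · rw [h] at h'; norm_num at h'
        · rw [hF2 ω h, clampAux_le_iff hu0 hu1]
          constructor
          · intro hh; exact Or.inr ⟨by linarith, h⟩
          · rintro (⟨_, h'⟩ | ⟨hh, _⟩)
            · rw [h] at h'; norm_num at h'
            · linarith
      have hdisj : Disjoint ({ω | Y ω ≤ 2 * u - 1} ∩ {ω | τ ω = 1})
          ({ω | Y ω ≤ 2 * u} ∩ {ω | τ ω = -1}) := by
        rw [Set.disjoint_left]
        rintro ω ⟨_, h1⟩ ⟨_, h2⟩
        rw [mem_setOf_eq] at h1 h2; rw [h1] at h2; norm_num at h2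
      have hmeas : MeasurableSet ({ω | Y ω ≤ 2 * u} ∩ {ω | τ ω = -1}) :=
        (hY (measurableSet_Iic (a := 2 * u))).inter (hτ (measurableSet_singleton (-1)))
      rw [hSu, measure_union hdisj hmeas, hprodIic, hprodIic, hτhalf, hτm1, hμY, hμY,
        ENNReal.toReal_add (ENNReal.mul_ne_top ENNReal.ofReal_ne_top (by norm_num))
          (ENNReal.mul_ne_top ENNReal.ofReal_ne_top (by norm_num)), ENNReal.toReal_mul,
        ENNReal.toReal_mul, ENNReal.toReal_ofReal (by positivity),
        ENNReal.toReal_ofReal (by positivity),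
        show ((1:ENNReal)/2).toReal = 1/2 by norm_num]
      have := clampAux_split hu0 hu1.le
      linarith
  -- part 2
  have part2 : ∀ u ∈ Ioo (0:ℝ) 1,
      Tendsto (fun t : ℝ =>
          (μ {ω | excessPIT F Y t ω ≤ u ∧ t < Y ω}).toReal / (μ {ω | t < Y ω}).toReal)
        (𝓝[<] (1:ℝ)) (𝓝 (1 / 2 + u / 2)) := by
    intro u hu
    obtain ⟨hu0, hu1⟩ := hu
    have hev : (fun t : ℝ =>
        (μ {ω | excessPIT F Y t ω ≤ u ∧ t < Y ω}).toReal / (μ {ω | t < Y ω}).toReal)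
          =ᶠ[𝓝[<] (1:ℝ)] (fun _ => 1 / 2 + u / 2) := by
      filter_upwards [Ioo_mem_nhdsLT_of_mem
        (show (1:ℝ) ∈ Ioc (max (1 - u) 0) 1 from ⟨max_lt (by linarith) one_pos, le_refl 1⟩)]
        with t ht
      obtain ⟨ht0, ht1⟩ := ht
      have htu : 1 - u ≤ t := le_of_lt (lt_of_le_of_lt (le_max_left _ _) ht0)
      have ht0' : 0 < t := lt_of_le_of_lt (le_max_right _ _) ht0
      rw [hval u ⟨hu0, hu1⟩ t ht0' ht1 htu, hgt t ht0'.le ht1.le, div_eq_iff (by linarith)]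
      ring
    exact Tendsto.congr' hev.symm tendsto_const_nhds
  -- the upper endpoint is 1
  have hue : upperEndpoint μ Y = ((1:ℝ) : EReal) := by
    have hsetE : {x : ℝ | μ {ω | Y ω ≤ x} < 1} = Iio 1 := by
      ext x
      simp only [mem_setOf_eq, mem_Iio, hμY x]
      constructor
      · intro h
        by_contra hx
        push_neg at hx
        rw [show min (max x 0) 1 = 1 from min_eq_right (le_trans hx (le_max_left x 0)),
          ENNReal.ofReal_one] at h
        exact lt_irrefl _ h
      · intro hx
        have hlt : min (max x 0) 1 < 1 := lt_of_le_of_lt (min_le_left _ _) (max_lt hx one_pos)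
        rw [← ENNReal.ofReal_one]
        exact (ENNReal.ofReal_lt_ofReal_iff one_pos).mpr hlt
    unfold upperEndpoint
    rw [hsetE]
    apply le_antisymm
    · apply sSup_le
      rintro _ ⟨x, hx, rfl⟩
      exact_mod_cast hx.le
    · by_contra h
      push_neg at h
      obtain ⟨c, hc1, hc2⟩ := EReal.exists_between_coe_real h
      have hm : (c : EReal) ∈ Real.toEReal '' (Iio 1) := ⟨c, by exact_mod_cast hc2, rfl⟩
      exact absurd (le_sSup hm) (not_le.mpr hc1)
  -- the expected survival function
  have hint : ∀ t : ℝ, 0 < t → t < 1 → ∫ ω, (1 - F ω t) ∂μ = (3 - 2 * t) / 4 := by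
    intro t ht0 ht1
    have hfun : (fun ω => 1 - F ω t) =
        fun ω => (2 - t) / 2 - ({ω' | τ ω' = 1}.indicator (fun _ => (1/2 : ℝ)) ω) := by
      funext ω
      rcases hτval ω with h | h
      · rw [hF1 ω h t, clampAux_eval (by linarith) (by linarith),
          Set.indicator_of_mem (show ω ∈ {ω' | τ ω' = 1} from h)]
        ring
      · rw [hF2 ω h t, clampAux_eval (by linarith) (by linarith),
          Set.indicator_of_notMem (show ω ∉ {ω' | τ ω' = 1} by
            simp only [mem_setOf_eq, h]; norm_num)]
        ring
    rw [hfun, integral_sub (integrable_const _)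
      ((integrable_const (1/2 : ℝ)).indicator
        (show MeasurableSet {ω' | τ ω' = 1} from hτ (measurableSet_singleton 1))),
      integral_const, integral_indicator_const _
        (show MeasurableSet {ω' | τ ω' = 1} from hτ (measurableSet_singleton 1)),
      measureReal_def, measureReal_def, measure_univ, hτhalf, ENNReal.toReal_one, one_smul, smul_eq_mul,
      show ((1:ENNReal)/2).toReal = 1/2 by norm_num]
    ring
  refine ⟨part1, fun u hu => part2 u hu, ?_⟩
  rintro ⟨-, h2⟩
  have h := h2 (1/2) ⟨by norm_num, by norm_num⟩
  rw [hue, toEndpoint_coe_one] at h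
  have h0 : Tendsto (fun t : ℝ =>
      (μ {ω | excessPIT F Y t ω ≤ 1/2 ∧ t < Y ω}).toReal / ∫ ω, (1 - F ω t) ∂μ)
      (𝓝[<] (1:ℝ)) (𝓝 0) := by
    have hnum : Tendsto (fun t : ℝ => (1 + 1/2) * (1 - t) / 2) (𝓝[<] (1:ℝ)) (𝓝 0) := by
      have hc : Continuous (fun t : ℝ => (1 + 1/2) * (1 - t) / 2) := by continuity
      have h' : Tendsto (fun t : ℝ => (1 + 1/2) * (1 - t) / 2) (𝓝[<] (1:ℝ))
          (𝓝 ((1 + 1/2) * (1 - (1:ℝ)) / 2)) :=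
        (hc.tendsto 1).mono_left nhdsWithin_le_nhds
      simpa using h'
    have hden : Tendsto (fun t : ℝ => (3 - 2 * t) / 4) (𝓝[<] (1:ℝ)) (𝓝 (1/4)) := by
      have hc : Continuous (fun t : ℝ => (3 - 2 * t) / 4) := by continuity
      have h' : Tendsto (fun t : ℝ => (3 - 2 * t) / 4) (𝓝[<] (1:ℝ))
          (𝓝 ((3 - 2 * (1:ℝ)) / 4)) :=
        (hc.tendsto 1).mono_left nhdsWithin_le_nhds
      convert h' using 2
      norm_num
    have hquot := hnum.div hden (show (1/4 : ℝ) ≠ 0 by norm_num)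
    rw [zero_div] at hquot
    apply Tendsto.congr' _ hquot
    filter_upwards [Ioo_mem_nhdsLT_of_mem
      (show (1:ℝ) ∈ Ioc (1/2 : ℝ) 1 from ⟨by norm_num, le_refl 1⟩)] with t ht
    rw [hval (1/2) ⟨by norm_num, by norm_num⟩ t (by linarith [ht.1]) ht.2
      (by linarith [ht.1]), hint t (by linarith [ht.1]) ht.2]
    norm_num [Pi.div_apply]
  exact absurd (tendsto_nhds_unique h h0) (by norm_num)
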